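/- arXiv:1704.00688 — 2 statements merged into one kernel-verified Lean document; each statement's English description precedes it below -/
import Mathlib

section
/- The function d(X,Y) = log(1 + ‖X⁻¹·Y − I‖_op) defines a metric (distance function) on the group SU(1,1): it is nonnegative, vanishes iff X = Y, is symmetric, and satisfies the triangle inequality. -/
open Matrix
set_option maxHeartbeats 1000000

noncomputable section

/-- The operator norm of a `2 × 2` complex matrix acting on `ℂ²`. -/
def opNorm (X : Matrix (Fin 2) (Fin 2) ℂ) : ℝ :=
  ‖Matrix.toEuclideanCLM (𝕜 := ℂ) (n := Fin 2) X‖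

/-- The group SU(1,1), as a set of 2×2 complex matrices. -/
def SU11 : Set (Matrix (Fin 2) (Fin 2) ℂ) :=
  {X | ∃ a b : ℂ, X = !![a, b; starRingEnd ℂ b, starRingEnd ℂ a] ∧
    ‖a‖ ^ 2 - ‖b‖ ^ 2 = 1}

/-- The distance function on SU(1,1). -/
def dSU (X Y : Matrix (Fin 2) (Fin 2) ℂ) : ℝ :=
  Real.log (1 + opNorm (X⁻¹ * Y - 1))

/-! ### Structural lemmas about SU(1,1) -/

lemma det_form (a b : ℂ) : (!![a, b; starRingEnd ℂ b, starRingEnd ℂ a]).det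
    = ((‖a‖ ^ 2 - ‖b‖ ^ 2 : ℝ) : ℂ) := by
  rw [Matrix.det_fin_two_of, Complex.mul_conj, Complex.mul_conj,
    ← Complex.sq_norm, ← Complex.sq_norm]
  push_cast
  ring

lemma SU11_det_eq_one {X : Matrix (Fin 2) (Fin 2) ℂ} (hX : X ∈ SU11) : X.det = 1 := by
  obtain ⟨a, b, rfl, h⟩ := hX
  rw [det_form, h, Complex.ofReal_one]

lemma SU11_isUnit_det {X : Matrix (Fin 2) (Fin 2) ℂ} (hX : X ∈ SU11) : IsUnit X.det := by
  rw [SU11_det_eq_one hX]; exact isUnit_one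

lemma SU11_inv_mul {X : Matrix (Fin 2) (Fin 2) ℂ} (hX : X ∈ SU11) : X⁻¹ * X = 1 :=
  Matrix.nonsing_inv_mul X (SU11_isUnit_det hX)

lemma SU11_mul_inv {X : Matrix (Fin 2) (Fin 2) ℂ} (hX : X ∈ SU11) : X * X⁻¹ = 1 :=
  Matrix.mul_nonsing_inv X (SU11_isUnit_det hX)

lemma SU11_inv_eq {a b : ℂ} (h : ‖a‖ ^ 2 - ‖b‖ ^ 2 = 1) :
    (!![a, b; starRingEnd ℂ b, starRingEnd ℂ a])⁻¹
      = !![starRingEnd ℂ a, -b; -(starRingEnd ℂ b), a] := by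
  rw [Matrix.inv_def, det_form, h, Complex.ofReal_one, Ring.inverse_one,
    Matrix.adjugate_fin_two_of, one_smul]

lemma SU11_inv_mem {X : Matrix (Fin 2) (Fin 2) ℂ} (hX : X ∈ SU11) : X⁻¹ ∈ SU11 := by
  obtain ⟨a, b, rfl, h⟩ := hX
  refine ⟨starRingEnd ℂ a, -b, ?_, ?_⟩
  · rw [SU11_inv_eq h]
    congr 1 <;> simp
  · simpa using h

lemma SU11_mul_mem {X Y : Matrix (Fin 2) (Fin 2) ℂ} (hX : X ∈ SU11) (hY : Y ∈ SU11) :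
    X * Y ∈ SU11 := by
  obtain ⟨a, b, rfl, ha⟩ := hX
  obtain ⟨c, d, rfl, hc⟩ := hY
  refine ⟨a * c + b * starRingEnd ℂ d, a * d + b * starRingEnd ℂ c, ?_, ?_⟩
  · rw [Matrix.mul_fin_two]
    congr 1 <;> simp <;> ring_nf <;> simp
  · have hdet : (!![a, b; starRingEnd ℂ b, starRingEnd ℂ a] *
        !![c, d; starRingEnd ℂ d, starRingEnd ℂ c]).det = 1 := by
      rw [Matrix.det_mul, SU11_det_eq_one ⟨a, b, rfl, ha⟩, SU11_det_eq_one ⟨c, d, rfl, hc⟩,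
        one_mul]
    rw [Matrix.mul_fin_two] at hdet
    have h2 : (!![a * c + b * starRingEnd ℂ d, a * d + b * starRingEnd ℂ c;
        starRingEnd ℂ (a * d + b * starRingEnd ℂ c),
        starRingEnd ℂ (a * c + b * starRingEnd ℂ d)]).det = 1 := by
      rw [← hdet]
      congr 1 <;> simp <;> ring_nf <;> simp
    rw [det_form] at h2
    exact_mod_cast h2

/-! ### Norm lemmas -/

lemma opNorm_nonneg (A : Matrix (Fin 2) (Fin 2) ℂ) : 0 ≤ opNorm A := norm_nonneg _

lemma opNorm_eq_zero {A : Matrix (Fin 2) (Fin 2) ℂ} : opNorm A = 0 ↔ A = 0 := by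
  rw [opNorm, norm_eq_zero, EmbeddingLike.map_eq_zero_iff]

lemma opNorm_mul_le (A B : Matrix (Fin 2) (Fin 2) ℂ) :
    opNorm (A * B) ≤ opNorm A * opNorm B := by
  rw [opNorm, opNorm, opNorm, _root_.map_mul]
  exact norm_mul_le _ _

lemma opNorm_add_le (A B : Matrix (Fin 2) (Fin 2) ℂ) :
    opNorm (A + B) ≤ opNorm A + opNorm B := by
  rw [opNorm, opNorm, opNorm, map_add]
  exact norm_add_le _ _

lemma opNorm_conjTranspose (A : Matrix (Fin 2) (Fin 2) ℂ) : opNorm Aᴴ = opNorm A := by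
  rw [opNorm, opNorm, ← Matrix.star_eq_conjTranspose, map_star]
  exact ContinuousLinearMap.adjoint.norm_map _

def Dm : Matrix (Fin 2) (Fin 2) ℂ := !![1, 0; 0, -1]

lemma Dm_mul_Dm : Dm * Dm = 1 := by
  rw [Dm, Matrix.mul_fin_two]
  norm_num
  rw [← Matrix.one_fin_two]

lemma Dm_conjTranspose : Dmᴴ = Dm := by
  rw [Dm]; ext i j; fin_cases i <;> fin_cases j <;> simp [Matrix.conjTranspose_apply]

lemma opNorm_Dm : opNorm Dm = 1 := by
  set x := Matrix.toEuclideanCLM (𝕜 := ℂ) (n := Fin 2) Dm with hx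
  have hstar : star x * x = 1 := by
    rw [hx, ← map_star, ← _root_.map_mul, Matrix.star_eq_conjTranspose, Dm_conjTranspose,
      Dm_mul_Dm, _root_.map_one]
  have h1 := ContinuousLinearMap.norm_adjoint_comp_self x
  rw [← ContinuousLinearMap.star_eq_adjoint] at h1
  rw [show star x ∘L x = star x * x from rfl, hstar, norm_one] at h1
  rcases mul_self_eq_one_iff.mp h1.symm with h | h
  · exact h
  · nlinarith [norm_nonneg x]

lemma opNorm_Dm_conj (A : Matrix (Fin 2) (Fin 2) ℂ) : opNorm (Dm * A * Dm) = opNorm A := by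
  have h1 : ∀ B : Matrix (Fin 2) (Fin 2) ℂ, opNorm (Dm * B * Dm) ≤ opNorm B := by
    intro B
    calc opNorm (Dm * B * Dm) ≤ opNorm (Dm * B) * opNorm Dm := opNorm_mul_le _ _
      _ ≤ opNorm Dm * opNorm B * opNorm Dm :=
        mul_le_mul_of_nonneg_right (opNorm_mul_le _ _) (opNorm_nonneg _)
      _ = opNorm B := by rw [opNorm_Dm]; ring
  refine le_antisymm (h1 A) ?_
  have h2 : A = Dm * (Dm * A * Dm) * Dm := by
    calc A = (Dm * Dm) * A * (Dm * Dm) := by rw [Dm_mul_Dm]; simp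
    _ = Dm * (Dm * A * Dm) * Dm := by noncomm_ring
  nth_rewrite 1 [h2]
  exact h1 _

lemma key_conj {M : Matrix (Fin 2) (Fin 2) ℂ} (hM : M ∈ SU11) :
    M⁻¹ - 1 = Dm * (M - 1)ᴴ * Dm := by
  obtain ⟨a, b, rfl, h⟩ := hM
  rw [SU11_inv_eq h, Dm]
  ext i j
  fin_cases i <;> fin_cases j <;>
    simp [Matrix.mul_apply, Matrix.conjTranspose_apply, Fin.sum_univ_two, Matrix.one_apply,
      Matrix.vecMul, Matrix.vecHead, Matrix.vecTail, dotProduct, Matrix.sub_apply]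

lemma opNorm_inv_sub_one {M : Matrix (Fin 2) (Fin 2) ℂ} (hM : M ∈ SU11) :
    opNorm (M⁻¹ - 1) = opNorm (M - 1) := by
  rw [key_conj hM, opNorm_Dm_conj, opNorm_conjTranspose]

theorem dSU_is_metric_on_SU11 :
    (∀ X ∈ SU11, ∀ Y ∈ SU11, 0 ≤ dSU X Y) ∧
    (∀ X ∈ SU11, ∀ Y ∈ SU11, (dSU X Y = 0 ↔ X = Y)) ∧
    (∀ X ∈ SU11, ∀ Y ∈ SU11, dSU X Y = dSU Y X) ∧
    (∀ X ∈ SU11, ∀ Y ∈ SU11, ∀ Z ∈ SU11, dSU X Z ≤ dSU X Y + dSU Y Z) := by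
  refine ⟨?_, ?_, ?_, ?_⟩
  · intro X _ Y _
    exact Real.log_nonneg (by linarith [opNorm_nonneg (X⁻¹ * Y - 1)])
  · intro X hX Y hY
    constructor
    · intro h
      have hn := opNorm_nonneg (X⁻¹ * Y - 1)
      have ht : opNorm (X⁻¹ * Y - 1) = 0 := by
        rcases Real.log_eq_zero.mp h with h' | h' | h' <;> linarith
      have h1 : X⁻¹ * Y = 1 := sub_eq_zero.mp (opNorm_eq_zero.mp ht)
      have h2 : X * (X⁻¹ * Y) = X * 1 := by rw [h1]
      rw [← mul_assoc, SU11_mul_inv hX, one_mul, mul_one] at h2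
      exact h2.symm
    · rintro rfl
      rw [dSU, SU11_inv_mul hX, sub_self, opNorm_eq_zero.mpr rfl, add_zero, Real.log_one]
  · intro X hX Y hY
    have hM : X⁻¹ * Y ∈ SU11 := SU11_mul_mem (SU11_inv_mem hX) hY
    have hinv : (X⁻¹ * Y)⁻¹ = Y⁻¹ * X := by
      rw [Matrix.mul_inv_rev, Matrix.nonsing_inv_nonsing_inv X (SU11_isUnit_det hX)]
    rw [dSU, dSU, ← hinv, opNorm_inv_sub_one hM]
  · intro X hX Y hY Z hZ
    set A := X⁻¹ * Y - 1 with hA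
    set B := Y⁻¹ * Z - 1 with hB
    have hXZ : X⁻¹ * Z - 1 = A * B + A + B := by
      have h1 : X⁻¹ * Z = (X⁻¹ * Y) * (Y⁻¹ * Z) := by
        rw [show (X⁻¹ * Y) * (Y⁻¹ * Z) = X⁻¹ * (Y * Y⁻¹) * Z by noncomm_ring,
          SU11_mul_inv hY, mul_one]
      rw [h1, hA, hB]; noncomm_ring
    have hbound : opNorm (X⁻¹ * Z - 1) ≤ opNorm A * opNorm B + opNorm A + opNorm B := by
      rw [hXZ]
      calc opNorm (A * B + A + B) ≤ opNorm (A * B + A) + opNorm B := opNorm_add_le _ _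
        _ ≤ opNorm (A * B) + opNorm A + opNorm B := by
          linarith [opNorm_add_le (A * B) A]
        _ ≤ opNorm A * opNorm B + opNorm A + opNorm B := by
          linarith [opNorm_mul_le A B]
    have ha := opNorm_nonneg A
    have hb := opNorm_nonneg B
    have hprod : 1 + opNorm (X⁻¹ * Z - 1) ≤ (1 + opNorm A) * (1 + opNorm B) := by
      nlinarith
    calc dSU X Z ≤ Real.log ((1 + opNorm A) * (1 + opNorm B)) := by
          rw [dSU]
          exact Real.log_le_log (by linarith [opNorm_nonneg (X⁻¹ * Z - 1)]) hprod
      _ = dSU X Y + dSU Y Z := by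
          rw [dSU, dSU, Real.log_mul (by linarith) (by linarith)]

end
end

section
/- For F ∈ 𝔻, z on the unit circle, and n ∈ ℤ, the matrix logarithm of the transfer matrix T_n = (1 − |F|²)^{−1/2}·(1, F zⁿ; conj(F) z^{−n}, 1) equals g(F)·(0, F zⁿ; conj(F) z^{−n}, 0), where g(t) = (2|t|)^{−1}·log((1+|t|)/(1−|t|)) (and g(0)=1). Consequently ‖log T_n − (0, F zⁿ; conj(F) z^{−n}, 0)‖_op = |g(F) − 1|·|F|. -/
set_option synthInstance.maxHeartbeats 1000000
set_option maxHeartbeats 1000000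

noncomputable section

def transfer (F z : ℂ) (n : ℤ) : Matrix (Fin 2) (Fin 2) ℂ :=
  (Real.sqrt (1 - ‖F‖ ^ 2))⁻¹ •
    !![1, F * z ^ n; starRingEnd ℂ F * z ^ (-n), 1]

/-- The linearized (Lie algebra) jump matrix `(0, F zⁿ; conj(F) z^{-n}, 0)`. -/
def linA (F z : ℂ) (n : ℤ) : Matrix (Fin 2) (Fin 2) ℂ :=
  !![0, F * z ^ n; starRingEnd ℂ F * z ^ (-n), 0]

def gFun (t : ℂ) : ℝ :=
  if t = 0 then 1
  else (2 * ‖t‖)⁻¹ * Real.log ((1 + ‖t‖) / (1 - ‖t‖))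

/-- operator norm of an antidiagonal hermitian 2×2 matrix. -/
lemma opNorm_anti (b : ℂ) : opNorm !![0, b; starRingEnd ℂ b, 0] = ‖b‖ := by
  have hstar : star !![0, b; starRingEnd ℂ b, 0] = !![0, b; starRingEnd ℂ b, 0] := by
    ext i j
    fin_cases i <;> fin_cases j <;>
      simp [Matrix.conjTranspose_apply]
  have hbb : b * starRingEnd ℂ b = ((‖b‖ ^ 2 : ℝ) : ℂ) := by
    rw [Complex.mul_conj, Complex.normSq_eq_norm_sq]
  have hbb' : starRingEnd ℂ b * b = ((‖b‖ ^ 2 : ℝ) : ℂ) := by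
    rw [mul_comm]; exact hbb
  have hXX : !![0, b; starRingEnd ℂ b, 0] * !![0, b; starRingEnd ℂ b, 0]
      = ((‖b‖ ^ 2 : ℝ) : ℂ) • (1 : Matrix (Fin 2) (Fin 2) ℂ) := by
    ext i j
    fin_cases i <;> fin_cases j <;>
      simp [Matrix.mul_apply, Fin.sum_univ_two, Matrix.one_apply, hbb, hbb']
  set T := Matrix.toEuclideanCLM (𝕜 := ℂ) (n := Fin 2) !![0, b; starRingEnd ℂ b, 0] with hT
  have h1 : ‖T‖ * ‖T‖ = ‖star T * T‖ := (CStarRing.norm_star_mul_self).symm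
  have h2 : star T * T = ((‖b‖ ^ 2 : ℝ) : ℂ) • 1 := by
    rw [hT, ← map_star, ← map_mul, hstar, hXX, map_smul, map_one]
  have h3 : ‖star T * T‖ = ‖b‖ ^ 2 := by
    rw [h2, ← Algebra.algebraMap_eq_smul_one, norm_algebraMap']
    simp [abs_of_nonneg (sq_nonneg (‖b‖))]
  have h4 : ‖T‖ * ‖T‖ = ‖b‖ * ‖b‖ := by
    rw [h1, h3]; ring
  exact (mul_self_inj (norm_nonneg _) (norm_nonneg b)).mp h4

/-- The principal matrix logarithm of the transfer matrix `T_n` is `g(F)` times the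
linearized jump matrix: equivalently, `T_n = exp (g(F) • (0, F zⁿ; conj F z^{−n}, 0))`;
consequently `‖log T_n − (0, F zⁿ; conj F z^{−n}, 0)‖_op = |g(F) − 1|·|F|`. -/
theorem log_transfer (F z : ℂ) (n : ℤ)
    (hF : ‖F‖ < 1) (hz : ‖z‖ = 1) :
    NormedSpace.exp (gFun F • linA F z n) = transfer F z n ∧
      opNorm (gFun F • linA F z n - linA F z n) = |gFun F - 1| * ‖F‖ := by
  have hz0 : z ≠ 0 := by
    intro h; rw [h] at hz; simp at hz
  have hzn : ‖z ^ n‖ = 1 := by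
    rw [norm_zpow, hz, one_zpow]
  set w : ℂ := F * z ^ n with hw
  have habsw : ‖w‖ = ‖F‖ := by
    rw [hw, norm_mul, hzn, mul_one]
  have hzinv : starRingEnd ℂ z = z⁻¹ := by
    refine eq_inv_of_mul_eq_one_right ?_
    rw [Complex.mul_conj]
    norm_cast
    rw [Complex.normSq_eq_norm_sq, hz, one_pow]
  have hconj : starRingEnd ℂ F * z ^ (-n) = starRingEnd ℂ w := by
    rw [hw, map_mul, map_zpow₀, hzinv, inv_zpow, ← zpow_neg]
  -- rewrite linA in terms of w
  have hA : linA F z n = !![0, w; starRingEnd ℂ w, 0] := by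
    rw [linA, hconj]
  -- Part 2: the operator norm computation
  have part2 : opNorm (gFun F • linA F z n - linA F z n)
      = |gFun F - 1| * ‖F‖ := by
    have hM : gFun F • linA F z n - linA F z n
        = !![0, ((gFun F - 1 : ℝ) : ℂ) * w;
            starRingEnd ℂ (((gFun F - 1 : ℝ) : ℂ) * w), 0] := by
      rw [hA]
      ext i j
      fin_cases i <;> fin_cases j <;>
        simp [Complex.real_smul] <;> push_cast <;> ring
    rw [hM, opNorm_anti, norm_mul, habsw, Complex.norm_real, Real.norm_eq_abs]
  refine ⟨?_, part2⟩
  -- Part 1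
  rcases eq_or_ne F 0 with hF0 | hF0
  · have hA0 : gFun F • linA F z n = 0 := by
      subst hF0
      ext i j
      fin_cases i <;> fin_cases j <;> simp [linA]
    rw [hA0, NormedSpace.exp_zero, transfer, hF0]
    simp [Matrix.one_fin_two]
  -- now F ≠ 0
  set r : ℝ := ‖F‖ with hr
  have hr0 : 0 < r := norm_pos_iff.mpr hF0
  have hw0 : w ≠ 0 := mul_ne_zero hF0 (zpow_ne_zero _ hz0)
  have h1r : 0 < 1 - r := by linarith
  have h1r' : 0 < 1 + r := by linarith
  set X : ℝ := (1 + r) / (1 - r) with hXdef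
  have hX0 : 0 < X := by positivity
  set c : ℝ := Real.sqrt X with hcdef
  have hc0 : 0 < c := Real.sqrt_pos.mpr hX0
  have hc2 : c ^ 2 = X := Real.sq_sqrt hX0.le
  set s : ℝ := Real.sqrt (1 - r ^ 2) with hsdef
  have hs0 : 0 < s := Real.sqrt_pos.mpr (by nlinarith)
  have hs2 : s ^ 2 = 1 - r ^ 2 := Real.sq_sqrt (by nlinarith)
  have hcs : (1 - r) * c = s := by
    have h : ((1 - r) * c) ^ 2 = s ^ 2 := by
      rw [mul_pow, hc2, hs2, hXdef]; field_simp; ring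
    have h2 := Real.sqrt_sq (by positivity : (0:ℝ) ≤ (1 - r) * c)
    rw [h, Real.sqrt_sq hs0.le] at h2; exact h2.symm
  have hg : gFun F = (2 * r)⁻¹ * Real.log X := by
    rw [gFun, if_neg hF0, hXdef, hr]
  have harg : gFun F * r = Real.log X / 2 := by
    rw [hg]; field_simp
  have hexp1 : Real.exp (gFun F * r) = c := by
    rw [harg, Real.exp_half, Real.exp_log hX0, hcdef]
  have hexp2 : Real.exp (-(gFun F * r)) = c⁻¹ := by
    rw [Real.exp_neg, hexp1]
  -- eigenvector matrix
  set P : Matrix (Fin 2) (Fin 2) ℂ := !![w, w; (r : ℂ), -(r : ℂ)] with hP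
  have hrC : (r : ℂ) ≠ 0 := by exact_mod_cast hr0.ne'
  have hdet0 : IsUnit P.det := by
    rw [hP]
    rw [Matrix.det_fin_two_of]
    apply isUnit_iff_ne_zero.mpr
    intro h
    apply hw0
    have : w * -(r:ℂ) - w * (r:ℂ) = -(2 * r) * w := by ring
    rw [this] at h
    rcases mul_eq_zero.mp h with h' | h'
    · exfalso; apply hrC; simpa using h'
    · exact h'
  have hPP : P * P⁻¹ = 1 := Matrix.mul_nonsing_inv P hdet0
  have hww : starRingEnd ℂ w * w = (r : ℂ) ^ 2 := by
    rw [mul_comm, Complex.mul_conj, Complex.normSq_eq_norm_sq, habsw]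
    push_cast; ring
  clear_value w r X c s
  have rep : ∀ e f : ℂ,
      P * Matrix.diagonal ![e, f] * P⁻¹ =
        !![(e + f) / 2, ((e - f) / (2 * r)) * w;
           ((e - f) / (2 * r)) * starRingEnd ℂ w, (e + f) / 2] := by
    intro e f
    have key : !![(e + f) / 2, ((e - f) / (2 * r)) * w;
           ((e - f) / (2 * r)) * starRingEnd ℂ w, (e + f) / 2] * P
        = P * Matrix.diagonal ![e, f] := by
      ext i j
      fin_cases i <;> fin_cases j <;>
        · simp [hP, Matrix.mul_apply, Fin.sum_univ_two, Matrix.diagonal]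
          field_simp
          first
          | ring1
          | linear_combination (2*(e - f)) * hww
          | linear_combination (f - e) * hww
          | linear_combination (e - f) * hww
    calc P * Matrix.diagonal ![e, f] * P⁻¹
        = (!![(e + f) / 2, ((e - f) / (2 * r)) * w;
           ((e - f) / (2 * r)) * starRingEnd ℂ w, (e + f) / 2] * P) * P⁻¹ := by rw [key]
      _ = _ := by rw [Matrix.mul_assoc, hPP, Matrix.mul_one]
  -- identify g • A as a conjugated diagonal matrix
  set x : ℂ := ((gFun F * r : ℝ) : ℂ) with hxdef
  have hxr : ((gFun F : ℝ) : ℂ) = (x + x) / (2 * (r : ℂ)) := by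
    rw [hxdef]; push_cast; field_simp; ring
  have hgA : gFun F • linA F z n = P * Matrix.diagonal ![x, -x] * P⁻¹ := by
    rw [rep x (-x), hA]
    ext i j
    fin_cases i <;> fin_cases j <;> simp [Complex.real_smul] <;>
      exact Or.inl hxr
  -- exponential of the diagonal
  have h0 : Complex.exp x = ((c : ℝ) : ℂ) := by
    rw [hxdef, ← Complex.ofReal_exp, hexp1]
  have h1 : Complex.exp (-x) = ((c⁻¹ : ℝ) : ℂ) := by
    rw [hxdef, ← Complex.ofReal_neg, ← Complex.ofReal_exp, hexp2]
  have hexpdiag : NormedSpace.exp (Matrix.diagonal ![x, -x])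
      = Matrix.diagonal ![((c : ℝ) : ℂ), ((c⁻¹ : ℝ) : ℂ)] := by
    rw [Matrix.exp_diagonal]
    ext i j
    fin_cases i <;> fin_cases j <;>
      simp [Matrix.diagonal_apply, ← Complex.exp_eq_exp_ℂ, h0, h1]
  -- real scalar identities
  have hcc : c ^ 2 * (1 - r) = 1 + r := by
    have h := hc2
    rw [hXdef] at h
    field_simp at h
    linarith
  have hsc : s * c = 1 + r := by
    rw [← hcs]; nlinarith [hcc]
  have hsc' : s * c⁻¹ = 1 - r := by
    rw [← hcs]; field_simp
  have hu : (c + c⁻¹) / 2 = s⁻¹ := by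
    have h2 : s * ((c + c⁻¹) / 2) = 1 := by
      have : s * ((c + c⁻¹) / 2) = (s * c + s * c⁻¹) / 2 := by ring
      rw [this, hsc, hsc']; ring
    field_simp at h2 ⊢
    linarith [h2]
  have hv : (c - c⁻¹) / (2 * r) = s⁻¹ := by
    have h2 : s * ((c - c⁻¹) / (2 * r)) = 1 := by
      have : s * ((c - c⁻¹) / (2 * r)) = (s * c - s * c⁻¹) / (2 * r) := by ring
      rw [this, hsc, hsc']
      field_simp
      ring
    field_simp at h2 ⊢
    linarith [h2]
  have huC : (((c : ℝ) : ℂ) + ((c⁻¹ : ℝ) : ℂ)) / 2 = ((s⁻¹ : ℝ) : ℂ) := by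
    exact_mod_cast congrArg (Complex.ofReal) hu
  have hvC : ((((c : ℝ) : ℂ) - ((c⁻¹ : ℝ) : ℂ)) / (2 * (r : ℂ))) = ((s⁻¹ : ℝ) : ℂ) := by
    exact_mod_cast congrArg (Complex.ofReal) hv
  -- put it all together
  rw [hgA, Matrix.exp_conj P _ ((Matrix.isUnit_iff_isUnit_det P).mpr hdet0),
    hexpdiag, rep, huC, hvC]
  rw [transfer, ← hr, ← hsdef]
  ext i j
  fin_cases i <;> fin_cases j <;>
    simp [Complex.real_smul, ← hw, hconj]
  exact Or.inl (by rw [← hconj, zpow_neg])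

end
end
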